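/- Let H be a Hadamard matrix of order M ≥ 1 (entries in {−1,1}, Hᵀ H = M·I), let z ∈ ℤ^M, and let n ∈ ℝ^M. Let y* ∈ ℤ^M be the coordinatewise nearest-integer rounding of H⁻¹·(H·(z : ℝ^M) + n). Then Σⱼ (y*ⱼ − zⱼ)² ≤ 4 · ‖n‖₂² / M. -/

import Mathlib

open Matrix

lemma sq_round_le (w : ℝ) : ((round w : ℝ))^2 ≤ 4 * w^2 := by
  rcases lt_or_ge (|w|) (1/2) with h | h
  · have : round w = 0 := round_eq_zero_iff.2 (abs_lt.1 h |> fun ⟨a,b⟩ => ⟨le_of_lt a, b⟩)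
    rw [this]
    norm_num
    positivity
  · have h1 : |(round w : ℝ)| ≤ |w| + 1/2 := by
      have := abs_sub_round w
      have : |(round w : ℝ) - w| ≤ 1/2 := by rwa [abs_sub_comm] at this
      calc |(round w : ℝ)| = |((round w : ℝ) - w) + w| := by ring_nf
        _ ≤ |(round w:ℝ) - w| + |w| := abs_add_le _ _
        _ ≤ |w| + 1/2 := by linarith
    have h2 : |(round w : ℝ)| ≤ 2 * |w| := by linarith
    calc ((round w : ℝ))^2 = |(round w:ℝ)|^2 := (sq_abs _).symm
      _ ≤ (2*|w|)^2 := by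
          have := abs_nonneg (round w : ℝ)
          nlinarith
      _ = 4 * w^2 := by rw [mul_pow, sq_abs]; ring

theorem stmt_10 {M : ℕ} (hM : 1 ≤ M) (H : Matrix (Fin M) (Fin M) ℝ)
    (hentries : ∀ i j, H i j = -1 ∨ H i j = 1)
    (hH : Hᵀ * H = (M : ℝ) • 1)
    (z : Fin M → ℤ) (n : Fin M → ℝ) (y : Fin M → ℤ)
    (hy : ∀ j, y j = round (H⁻¹.mulVec (H.mulVec (fun i => (z i : ℝ)) + n) j)) :
    ((∑ j, (y j - z j) ^ 2 : ℤ) : ℝ) ≤ 4 * (∑ j, (n j) ^ 2) / M := by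
  have hc : (0:ℝ) < M := by exact_mod_cast hM
  have hc0 : (M:ℝ) ≠ 0 := ne_of_gt hc
  have hleft : ((M:ℝ)⁻¹ • Hᵀ) * H = 1 := by
    rw [Matrix.smul_mul, hH, smul_smul, inv_mul_cancel₀ hc0, one_smul]
  have hinv : H⁻¹ = (M:ℝ)⁻¹ • Hᵀ := Matrix.inv_eq_left_inv hleft
  have hright : H * Hᵀ = (M:ℝ) • 1 := by
    have h1 : H * ((M:ℝ)⁻¹ • Hᵀ) = 1 := mul_eq_one_comm.2 hleft
    have : H * Hᵀ = (M:ℝ) • (H * ((M:ℝ)⁻¹ • Hᵀ)) := by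
      rw [Matrix.mul_smul, smul_smul, mul_inv_cancel₀ hc0, one_smul]
    rw [this, h1]
  set w : Fin M → ℝ := H⁻¹.mulVec n with hw
  have hkey : ∀ j, H⁻¹.mulVec (H.mulVec (fun i => (z i : ℝ)) + n) j = (z j : ℝ) + w j := by
    intro j
    rw [Matrix.mulVec_add, Matrix.mulVec_mulVec]
    have : H⁻¹ * H = 1 := by rw [hinv]; exact hleft
    rw [this, Matrix.one_mulVec]
    simp [hw]
  have hyz : ∀ j, y j - z j = round (w j) := by
    intro j
    rw [hy j, hkey j, round_intCast_add]
    ring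
  -- sum of w squared
  have hwsum : ∑ j, (w j)^2 = (∑ j, (n j)^2) / M := by
    have hdp : w ⬝ᵥ w = (M:ℝ)⁻¹ * ((M:ℝ)⁻¹ * ((M:ℝ) * (n ⬝ᵥ n))) := by
      have hw2 : w = (M:ℝ)⁻¹ • (Hᵀ *ᵥ n) := by
        rw [hw, hinv, Matrix.smul_mulVec]
      rw [hw2, smul_dotProduct, dotProduct_smul, smul_eq_mul, smul_eq_mul]
      congr 1
      congr 1
      rw [Matrix.dotProduct_mulVec, Matrix.vecMul_transpose, Matrix.mulVec_mulVec, hright,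
        Matrix.smul_mulVec, Matrix.one_mulVec, smul_dotProduct, smul_eq_mul]
    have : w ⬝ᵥ w = ∑ j, (w j)^2 := by
      simp [dotProduct, sq]
    rw [this] at hdp
    have : n ⬝ᵥ n = ∑ j, (n j)^2 := by simp [dotProduct, sq]
    rw [this] at hdp
    rw [hdp]
    field_simp
  push_cast
  calc ∑ j, ((y j : ℝ) - (z j : ℝ))^2 = ∑ j, ((round (w j) : ℝ))^2 := by
        refine Finset.sum_congr rfl fun j _ => ?_
        have := hyz j
        have : ((y j : ℝ) - z j) = ((round (w j) : ℝ)) := by exact_mod_cast congrArg (fun t : ℤ => (t : ℝ)) this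
        rw [this]
    _ ≤ ∑ j, 4 * (w j)^2 := Finset.sum_le_sum fun j _ => sq_round_le (w j)
    _ = 4 * ∑ j, (w j)^2 := by rw [Finset.mul_sum]
    _ = 4 * (∑ j, (n j)^2) / M := by rw [hwsum]; ring
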